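/- For every Young diagram λ, the sum of the squares of the contents of the addable corners of λ minus the sum of the squares of the contents of the removable corners of λ equals 2·|λ|, where |λ| is the number of cells of λ. -/

import Mathlib

/-- A cell `c` is an addable corner of the Young diagram `μ` if `c ∉ μ` and
adding `c` to `μ` again yields a Young diagram (i.e. a finite lower set). -/
def YoungDiagram.IsAddableCorner (μ : YoungDiagram) (c : ℕ × ℕ) : Prop :=
  c ∉ μ ∧ IsLowerSet (↑(insert c μ.cells) : Set (ℕ × ℕ))

/-- A cell `c` is a removable corner of the Young diagram `μ` if `c ∈ μ` and
removing `c` from `μ` again yields a Young diagram. -/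
def YoungDiagram.IsRemovableCorner (μ : YoungDiagram) (c : ℕ × ℕ) : Prop :=
  c ∈ μ ∧ IsLowerSet (↑(μ.cells.erase c) : Set (ℕ × ℕ))

/-- The content of the cell `(i, j)` is `j - i`. -/
def cellContent (c : ℕ × ℕ) : ℤ := (c.2 : ℤ) - (c.1 : ℤ)

lemma YD.rowLen_eq_zero {μ : YoungDiagram} {i : ℕ} (h : μ.colLen 0 ≤ i) : μ.rowLen i = 0 := by
  by_contra hne
  have : (i, 0) ∈ μ := YoungDiagram.mem_iff_lt_rowLen.2 (Nat.pos_of_ne_zero hne)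
  have := YoungDiagram.mem_iff_lt_colLen.1 this
  omega

lemma YD.addable_iff {μ : YoungDiagram} {i j : ℕ} :
    μ.IsAddableCorner (i, j) ↔
      j = μ.rowLen i ∧ (i = 0 ∨ μ.rowLen i < μ.rowLen (i - 1)) := by
  constructor
  · rintro ⟨hnot, hlow⟩
    rw [YoungDiagram.mem_iff_lt_rowLen, not_lt] at hnot
    have hself : ((i, j) : ℕ × ℕ) ∈ (↑(insert (i, j) μ.cells) : Set (ℕ × ℕ)) := by simp
    have hj : j = μ.rowLen i := by
      by_contra hne
      have hlt : μ.rowLen i < j := lt_of_le_of_ne hnot (Ne.symm hne)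
      have hmem := hlow (b := (i, j - 1)) (Prod.mk_le_mk.2 ⟨le_rfl, by omega⟩) hself
      simp only [Finset.coe_insert, Set.mem_insert_iff, Prod.mk.injEq, Finset.mem_coe,
        YoungDiagram.mem_cells, YoungDiagram.mem_iff_lt_rowLen] at hmem
      omega
    refine ⟨hj, ?_⟩
    rcases Nat.eq_zero_or_pos i with h0 | hpos
    · exact Or.inl h0
    · right
      have hmem := hlow (b := (i - 1, j)) (Prod.mk_le_mk.2 ⟨by omega, le_rfl⟩) hself
      simp only [Finset.coe_insert, Set.mem_insert_iff, Prod.mk.injEq, Finset.mem_coe,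
        YoungDiagram.mem_cells, YoungDiagram.mem_iff_lt_rowLen] at hmem
      rcases hmem with ⟨h, _⟩ | h <;> omega
  · rintro ⟨hj, hcase⟩
    constructor
    · rw [YoungDiagram.mem_iff_lt_rowLen]; omega
    · rintro ⟨x, y⟩ ⟨a, b⟩ ⟨hle1, hle2⟩ hmem
      simp only [Finset.coe_insert, Set.mem_insert_iff, Prod.mk.injEq, Finset.mem_coe,
        YoungDiagram.mem_cells] at hmem ⊢
      simp only [] at hle1 hle2
      rcases hmem with ⟨h1, h2⟩ | h
      · subst h1; subst h2
        rcases Nat.lt_or_ge a x with hax | hax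
        · right
          rw [YoungDiagram.mem_iff_lt_rowLen]
          have hx0 : x ≠ 0 := by omega
          have hlt : μ.rowLen x < μ.rowLen (x - 1) := hcase.resolve_left hx0
          have := μ.rowLen_anti a (x - 1) (by omega)
          omega
        · have hax' : μ.rowLen a = μ.rowLen x := by
            have : a = x := by omega
            rw [this]
          rcases Nat.lt_or_ge b y with hby | hby
          · right; rw [YoungDiagram.mem_iff_lt_rowLen]; omega
          · left; exact ⟨by omega, by omega⟩
      · exact Or.inr (μ.isLowerSet (Prod.mk_le_mk.2 ⟨hle1, hle2⟩) h)

lemma YD.removable_iff {μ : YoungDiagram} {i j : ℕ} :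
    μ.IsRemovableCorner (i, j) ↔
      j + 1 = μ.rowLen i ∧ μ.rowLen (i + 1) < μ.rowLen i := by
  constructor
  · rintro ⟨hmem, hlow⟩
    rw [YoungDiagram.mem_iff_lt_rowLen] at hmem
    have key : ∀ x y : ℕ, i ≤ x → j ≤ y → (x, y) ≠ ((i : ℕ), (j : ℕ)) → (x, y) ∉ μ := by
      intro x y hx hy hne hin
      have h1 : ((x, y) : ℕ × ℕ) ∈ (↑(μ.cells.erase (i, j)) : Set (ℕ × ℕ)) := by
        simp only [Finset.coe_erase, Set.mem_diff, Finset.mem_coe, YoungDiagram.mem_cells,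
          Set.mem_singleton_iff]
        exact ⟨hin, hne⟩
      have h2 := hlow (b := (i, j)) (Prod.mk_le_mk.2 ⟨hx, hy⟩) h1
      simp only [Finset.coe_erase, Set.mem_diff, Set.mem_singleton_iff] at h2
      exact h2.2 trivial
    have h1 : j + 1 = μ.rowLen i := by
      by_contra hne
      exact key i (j + 1) le_rfl (by omega) (by simp)
        (YoungDiagram.mem_iff_lt_rowLen.2 (by omega))
    have h2 : μ.rowLen (i + 1) ≤ j := by
      by_contra hne
      exact key (i + 1) j (by omega) le_rfl (by simp)
        (YoungDiagram.mem_iff_lt_rowLen.2 (by omega))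
    exact ⟨h1, by omega⟩
  · rintro ⟨hj, hstep⟩
    constructor
    · rw [YoungDiagram.mem_iff_lt_rowLen]; omega
    · rintro ⟨x, y⟩ ⟨a, b⟩ ⟨hle1, hle2⟩ hmem
      simp only [Finset.coe_erase, Set.mem_diff, Finset.mem_coe, YoungDiagram.mem_cells,
        Set.mem_singleton_iff, Prod.mk.injEq, not_and] at hmem ⊢
      simp only [] at hle1 hle2
      obtain ⟨hin, hne⟩ := hmem
      have hab : (a, b) ∈ μ := μ.isLowerSet (Prod.mk_le_mk.2 ⟨hle1, hle2⟩) hin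
      refine ⟨hab, ?_⟩
      intro h1 h2
      subst h1; subst h2
      rw [YoungDiagram.mem_iff_lt_rowLen] at hin
      rcases Nat.lt_or_ge a x with hlt | hge
      · have := μ.rowLen_anti (a + 1) x (by omega)
        omega
      · have heq : μ.rowLen x = μ.rowLen a := by
          have : x = a := by omega
          rw [this]
        have hxa : x = a := by omega
        have hyb : y = b := by omega
        exact hne hxa hyb

lemma YD.card_eq_sum_rowLen (μ : YoungDiagram) :
    μ.card = ∑ i ∈ Finset.range (μ.colLen 0), μ.rowLen i := by
  have hcells : μ.cells = (Finset.range (μ.colLen 0)).biUnion (fun i => μ.row i) := by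
    ext ⟨i, j⟩
    simp only [Finset.mem_biUnion, Finset.mem_range, YoungDiagram.mem_row_iff,
      YoungDiagram.mem_cells]
    constructor
    · intro h
      refine ⟨i, ?_, h, rfl⟩
      rw [← YoungDiagram.mem_iff_lt_colLen]
      exact μ.up_left_mem le_rfl (Nat.zero_le j) h
    · rintro ⟨k, _, h, rfl⟩; exact h
  rw [YoungDiagram.card, hcells, Finset.card_biUnion]
  · exact Finset.sum_congr rfl fun i _ => (μ.rowLen_eq_card (i := i)).symm
  · intro a _ b _ hab
    simp only [Finset.disjoint_left, YoungDiagram.mem_row_iff]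
    rintro ⟨x, y⟩ ⟨_, rfl⟩ ⟨_, h⟩
    exact hab h

lemma YD.addable_set_eq (μ : YoungDiagram) :
    {c | μ.IsAddableCorner c} =
      ↑(((Finset.range (μ.colLen 0 + 1)).filter
          (fun i => i = 0 ∨ μ.rowLen i < μ.rowLen (i - 1))).image
        (fun i => (i, μ.rowLen i))) := by
  ext ⟨i, j⟩
  simp only [Set.mem_setOf_eq, Finset.coe_image, Set.mem_image, Finset.mem_coe,
    Finset.mem_filter, Finset.mem_range, YD.addable_iff, Prod.mk.injEq]
  constructor
  · rintro ⟨rfl, hc⟩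
    refine ⟨i, ⟨?_, hc⟩, rfl, rfl⟩
    by_contra hgt
    have h1 : μ.rowLen i = 0 := YD.rowLen_eq_zero (by omega)
    have h2 : μ.rowLen (i - 1) = 0 := YD.rowLen_eq_zero (by omega)
    rcases hc with h | h <;> omega
  · rintro ⟨k, ⟨_, hk⟩, rfl, rfl⟩
    exact ⟨rfl, hk⟩

lemma YD.removable_set_eq (μ : YoungDiagram) :
    {c | μ.IsRemovableCorner c} =
      ↑(((Finset.range (μ.colLen 0)).filter
          (fun i => μ.rowLen (i + 1) < μ.rowLen i)).image
        (fun i => (i, μ.rowLen i - 1))) := by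
  ext ⟨i, j⟩
  simp only [Set.mem_setOf_eq, Finset.coe_image, Set.mem_image, Finset.mem_coe,
    Finset.mem_filter, Finset.mem_range, YD.removable_iff, Prod.mk.injEq]
  constructor
  · rintro ⟨hj, hc⟩
    refine ⟨i, ⟨?_, hc⟩, rfl, by omega⟩
    by_contra hgt
    have h1 : μ.rowLen i = 0 := YD.rowLen_eq_zero (by omega)
    omega
  · rintro ⟨k, ⟨hk1, hk2⟩, rfl, rfl⟩
    exact ⟨by omega, hk2⟩

lemma YD.gauss (n : ℕ) : 2 * ∑ i ∈ Finset.range n, (i : ℤ) = n ^ 2 - n := by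
  induction n with
  | zero => simp
  | succ k ih => rw [Finset.sum_range_succ]; push_cast; push_cast at ih; ring_nf; ring_nf at ih; omega

/-- The sum of the squares of the contents of the addable corners of a Young
diagram `μ`, minus the sum of the squares of the contents of its removable
corners, equals `2 |μ|`. -/
theorem sum_sq_contents_addable_sub_removable (μ : YoungDiagram) :
    (∑ᶠ c ∈ {c | μ.IsAddableCorner c}, (cellContent c) ^ 2) -
      (∑ᶠ c ∈ {c | μ.IsRemovableCorner c}, (cellContent c) ^ 2) =
      2 * (μ.card : ℤ) := by
  classical
  set N := μ.colLen 0 with hN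
  set f : ℕ → ℤ := fun i => ((μ.rowLen i : ℤ) - i) ^ 2 with hf
  set g : ℕ → ℤ := fun i => ((μ.rowLen i : ℤ) - 1 - i) ^ 2 with hg
  set P : ℕ → Prop := fun i => i = 0 ∨ μ.rowLen i < μ.rowLen (i - 1) with hP
  set Q : ℕ → Prop := fun i => μ.rowLen (i + 1) < μ.rowLen i with hQ
  have hA : (∑ᶠ c ∈ {c | μ.IsAddableCorner c}, (cellContent c) ^ 2)
      = ∑ i ∈ (Finset.range (N + 1)).filter P, f i := by
    rw [YD.addable_set_eq, finsum_mem_coe_finset,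
      Finset.sum_image (fun a _ b _ h => congrArg Prod.fst h)]
    exact Finset.sum_congr rfl fun i _ => by simp [cellContent, hf]
  have hR : (∑ᶠ c ∈ {c | μ.IsRemovableCorner c}, (cellContent c) ^ 2)
      = ∑ i ∈ (Finset.range N).filter Q, g i := by
    rw [YD.removable_set_eq, finsum_mem_coe_finset,
      Finset.sum_image (fun a _ b _ h => congrArg Prod.fst h)]
    refine Finset.sum_congr rfl fun i hi => ?_
    simp only [Finset.mem_filter, Finset.mem_range] at hi
    have h1 : 1 ≤ μ.rowLen i := by have := hi.2; omega
    simp only [cellContent, hg]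
    rw [Nat.cast_sub h1]
    push_cast
    ring
  -- complements are equal
  have hcomp : ∑ i ∈ (Finset.range (N + 1)).filter (fun i => ¬ P i), f i
      = ∑ i ∈ (Finset.range N).filter (fun i => ¬ Q i), g i := by
    refine Finset.sum_nbij' (fun i => i - 1) (fun i => i + 1) ?_ ?_ ?_ ?_ ?_
    · intro a ha
      simp only [Finset.mem_filter, Finset.mem_range, hP, hQ, not_or, not_lt] at ha ⊢
      obtain ⟨ha1, ha2, ha3⟩ := ha
      have heq : a - 1 + 1 = a := by omega
      rw [heq]
      have := μ.rowLen_anti (a - 1) a (by omega)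
      constructor
      · -- a - 1 < N : a ≤ N and a ≠ 0; if a = N need N > 0, true since a ≥ 1; a-1 ≤ N-1 < N if N ≥ 1
        omega
      · omega
    · intro a ha
      simp only [Finset.mem_filter, Finset.mem_range, hP, hQ, not_or, not_lt] at ha ⊢
      obtain ⟨ha1, ha2⟩ := ha
      refine ⟨by omega, by omega, ?_⟩
      simpa using ha2
    · intro a ha
      simp only [Finset.mem_filter, hP, not_or] at ha
      show a - 1 + 1 = a
      omega
    · intro a _
      show a + 1 - 1 = a
      omega
    · intro a ha
      simp only [Finset.mem_filter, Finset.mem_range, hP, not_or, not_lt] at ha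
      obtain ⟨ha1, ha2, ha3⟩ := ha
      have hanti := μ.rowLen_anti (a - 1) a (by omega)
      have heq : μ.rowLen (a - 1) = μ.rowLen a := le_antisymm ha3 hanti
      simp only [hf, hg, heq]
      have : ((a - 1 : ℕ) : ℤ) = (a : ℤ) - 1 := by
        have : 1 ≤ a := by omega
        push_cast [this]; ring
      rw [this]; ring
  have hsplitA := Finset.sum_filter_add_sum_filter_not (Finset.range (N + 1)) P f
  have hsplitR := Finset.sum_filter_add_sum_filter_not (Finset.range N) Q g
  rw [hA, hR]
  have key : ∑ i ∈ Finset.range (N + 1), f i - ∑ i ∈ Finset.range N, g i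
      = 2 * (μ.card : ℤ) := by
    rw [Finset.sum_range_succ]
    have hsub : ∑ i ∈ Finset.range N, (f i - g i)
        = ∑ i ∈ Finset.range N, f i - ∑ i ∈ Finset.range N, g i := Finset.sum_sub_distrib f g
    have hfg : ∀ i, f i - g i = 2 * (μ.rowLen i : ℤ) - 2 * i - 1 := by
      intro i; simp only [hf, hg]; ring
    have hsum : ∑ i ∈ Finset.range N, (f i - g i)
        = 2 * ∑ i ∈ Finset.range N, (μ.rowLen i : ℤ) - (N ^ 2 - N) - N := by
      simp only [hfg]
      rw [Finset.sum_sub_distrib, Finset.sum_sub_distrib, ← Finset.mul_sum, ← Finset.mul_sum,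
        YD.gauss]
      simp [Finset.sum_const]
    have hfN : f N = (N : ℤ) ^ 2 := by
      simp only [hf, YD.rowLen_eq_zero (le_refl N)]
      push_cast; ring
    have hcard : (μ.card : ℤ) = ∑ i ∈ Finset.range N, (μ.rowLen i : ℤ) := by
      rw [YD.card_eq_sum_rowLen]; push_cast; rfl
    rw [hfN, hcard]
    linarith [hsum, hsub]
  linarith [hsplitA, hsplitR, hcomp, key]
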